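/- Let N, n, d be positive integers with n ≤ N and d ≤ N, let α > 0, λ ≥ 0, ε ≥ 0 be real numbers, let U ∈ ℂ^{N×N} be a unitary matrix, and let A ∈ ℂ^{n×d}. Suppose that ‖A − α·U[1..n, 1..d]‖ ≤ ε, where U[1..n, 1..d] denotes the submatrix of U consisting of its first n rows and first d columns and ‖·‖ is the ℓ²-operator norm. Let Ã ∈ ℂ^{(n+d)×d} be the block matrix whose top n×d block is A and whose bottom d×d block is λ I_d. Then there exists a unitary matrix W ∈ ℂ^{4N×4N} such that ‖Ã − (α+λ)·W[1..n+d, 1..d]‖ ≤ ε. -/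

import Mathlib

open Matrix

noncomputable def l2OpNorm {m n : ℕ} (M : Matrix (Fin m) (Fin n) ℂ) : ℝ :=
  ‖LinearMap.toContinuousLinearMap (Matrix.toEuclideanLin M)‖


-- submatrix by equivs of a unitary is unitary
lemma submatrix_mem_unitaryGroup {m k : Type*} [Fintype m] [Fintype k] [DecidableEq m]
    [DecidableEq k] (e f : k ≃ m) (M : Matrix m m ℂ) (h : M ∈ Matrix.unitaryGroup m ℂ) :
    M.submatrix e f ∈ Matrix.unitaryGroup k ℂ := by
  rw [Matrix.mem_unitaryGroup_iff] at h ⊢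
  calc M.submatrix e f * star (M.submatrix e f)
      = M.submatrix e f * (star M).submatrix f e := by
        rw [Matrix.star_eq_conjTranspose, Matrix.star_eq_conjTranspose,
          Matrix.conjTranspose_submatrix]
    _ = (M * star M).submatrix e e := Matrix.submatrix_mul_equiv _ _ _ _ _
    _ = 1 := by rw [h, Matrix.submatrix_one_equiv]

lemma fromBlocks_diag_unitary {k : Type*} [Fintype k] [DecidableEq k]
    (X Y : Matrix k k ℂ) (hX : X ∈ Matrix.unitaryGroup k ℂ) (hY : Y ∈ Matrix.unitaryGroup k ℂ) :
    Matrix.fromBlocks X 0 0 Y ∈ Matrix.unitaryGroup (k ⊕ k) ℂ := by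
  rw [Matrix.mem_unitaryGroup_iff] at hX hY ⊢
  rw [Matrix.star_eq_conjTranspose, Matrix.fromBlocks_conjTranspose]
  rw [Matrix.fromBlocks_multiply]
  simp [← Matrix.star_eq_conjTranspose, hX, hY, Matrix.fromBlocks_one]

lemma rot_unitary {k : Type*} [Fintype k] [DecidableEq k] (s t : ℝ)
    (hst : s * s + t * t = 1) :
    Matrix.fromBlocks ((s:ℂ) • 1) (-((t:ℂ) • 1)) ((t:ℂ) • 1) ((s:ℂ) • 1)
      ∈ Matrix.unitaryGroup (k ⊕ k) ℂ := by
  rw [Matrix.mem_unitaryGroup_iff]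
  rw [Matrix.star_eq_conjTranspose, Matrix.fromBlocks_conjTranspose]
  rw [Matrix.fromBlocks_multiply]
  have h2 : ((s:ℂ) * s + (t:ℂ) * t) = 1 := by
    have := congrArg (Complex.ofReal) hst; push_cast at this; linear_combination this
  simp only [Matrix.conjTranspose_smul, Matrix.conjTranspose_one, Matrix.conjTranspose_neg,
    Matrix.smul_mul, Matrix.mul_smul, Matrix.one_mul, Matrix.mul_one, Matrix.neg_mul,
    Matrix.mul_neg, smul_neg, neg_neg, smul_smul, Complex.star_def, Complex.conj_ofReal,
    map_neg, mul_neg, neg_mul, neg_neg, ← neg_smul, ← add_smul]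
  have e0 : ((t:ℂ) * s + -(s * t)) • (1 : Matrix k k ℂ) = 0 := by
    rw [show ((t:ℂ) * s + -(s * t)) = 0 by ring, zero_smul]
  have e0' : ((s:ℂ) * t + -(t * s)) • (1 : Matrix k k ℂ) = 0 := by
    rw [show ((s:ℂ) * t + -(t * s)) = 0 by ring, zero_smul]
  have e1 : ((s:ℂ) * s + t * t) • (1 : Matrix k k ℂ) = 1 := by rw [h2, one_smul]
  have e1' : ((t:ℂ) * t + s * s) • (1 : Matrix k k ℂ) = 1 := by
    rw [show ((t:ℂ) * t + s * s) = s * s + t * t by ring, h2, one_smul]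
  rw [e0, e0', e1, e1', Matrix.fromBlocks_one]

lemma block00_entry {k : Type*} [Fintype k] [DecidableEq k] (s t : ℝ)
    (X Y : Matrix k k ℂ) (a b : k) :
    ((star (Matrix.fromBlocks ((s:ℂ) • 1) (-((t:ℂ) • 1)) ((t:ℂ) • 1) ((s:ℂ) • 1)) *
      Matrix.fromBlocks X 0 0 Y *
      Matrix.fromBlocks ((s:ℂ) • 1) (-((t:ℂ) • 1)) ((t:ℂ) • 1) ((s:ℂ) • 1) :
        Matrix (k ⊕ k) (k ⊕ k) ℂ))
      (Sum.inl a) (Sum.inl b)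
    = ((s:ℂ) * s) * X a b + ((t:ℂ) * t) * Y a b := by
  rw [Matrix.star_eq_conjTranspose, Matrix.fromBlocks_conjTranspose]
  rw [Matrix.fromBlocks_multiply, Matrix.fromBlocks_multiply]
  rw [Matrix.fromBlocks_apply₁₁]
  simp [Matrix.smul_mul, Matrix.mul_smul, smul_smul, Complex.star_def, Complex.conj_ofReal,
    Matrix.add_apply, Matrix.smul_apply, smul_eq_mul]


lemma l2OpNorm_stack {n k d : ℕ} (B : Matrix (Fin n) (Fin d) ℂ) :
    l2OpNorm (Matrix.of fun (i : Fin (n + k)) (j : Fin d) =>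
      if h : (i : ℕ) < n then B ⟨i, h⟩ j else 0) ≤ l2OpNorm B := by
  unfold l2OpNorm
  apply ContinuousLinearMap.opNorm_le_bound _ (norm_nonneg _)
  intro x
  have hB := (LinearMap.toContinuousLinearMap (Matrix.toEuclideanLin B)).le_opNorm x
  refine le_trans (le_of_eq ?_) hB
  have key : ∀ {p q : ℕ} (M : Matrix (Fin p) (Fin q) ℂ) (y : EuclideanSpace ℂ (Fin q)),
      (LinearMap.toContinuousLinearMap (Matrix.toEuclideanLin M)) y
        = (WithLp.equiv 2 (Fin p → ℂ)).symm (M *ᵥ (WithLp.equiv 2 (Fin q → ℂ)) y) :=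
    fun _ _ => rfl
  rw [key, key, EuclideanSpace.norm_eq, EuclideanSpace.norm_eq]
  congr 1
  rw [Fin.sum_univ_add]
  have h2 : ∀ i : Fin k, ‖(WithLp.equiv 2 (Fin (n+k) → ℂ)).symm
      ((Matrix.of fun (i : Fin (n + k)) (j : Fin d) =>
        if h : (i : ℕ) < n then B ⟨i, h⟩ j else 0) *ᵥ (WithLp.equiv 2 (Fin d → ℂ)) x)
      (Fin.natAdd n i)‖ ^ 2 = 0 := by
    intro i
    simp only [WithLp.equiv_symm_apply, PiLp.toLp_apply, Matrix.mulVec, Matrix.of_apply, dotProduct]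
    have : ∀ j, (if h : ((Fin.natAdd n i : Fin (n+k)) : ℕ) < n then B ⟨_, h⟩ j else 0)
        * (WithLp.equiv 2 (Fin d → ℂ)) x j = 0 := by
      intro j
      rw [dif_neg (by simp [Fin.natAdd])]
      ring
    simp [this]
  rw [Finset.sum_congr rfl (fun i _ => h2 i), Finset.sum_const, smul_zero, add_zero]
  apply Finset.sum_congr rfl
  intro i _
  simp only [WithLp.equiv_symm_apply, PiLp.toLp_apply, Matrix.mulVec, Matrix.of_apply, dotProduct]
  congr 2
  apply Finset.sum_congr rfl
  intro j _
  rw [dif_pos (by simp : ((Fin.castAdd k i : Fin (n+k)) : ℕ) < n)]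
  congr 1


theorem stmt_1 (N n d : ℕ) (hN : 0 < N) (hn : 0 < n) (hd : 0 < d)
    (hnN : n ≤ N) (hdN : d ≤ N)
    (α lam ε : ℝ) (hα : 0 < α) (hlam : 0 ≤ lam) (hε : 0 ≤ ε)
    (U : Matrix (Fin N) (Fin N) ℂ) (hU : U ∈ Matrix.unitaryGroup (Fin N) ℂ)
    (A : Matrix (Fin n) (Fin d) ℂ)
    (hBE : l2OpNorm (A - (α : ℂ) • U.submatrix (Fin.castLE hnN) (Fin.castLE hdN)) ≤ ε) :
    ∃ W : Matrix (Fin (4 * N)) (Fin (4 * N)) ℂ,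
      W ∈ Matrix.unitaryGroup (Fin (4 * N)) ℂ ∧
      l2OpNorm
        ((Matrix.of fun (i : Fin (n + d)) (j : Fin d) =>
            if h : (i : ℕ) < n then A ⟨i, h⟩ j
            else if (i : ℕ) = n + (j : ℕ) then (lam : ℂ) else 0)
          - ((α : ℂ) + (lam : ℂ)) •
              W.submatrix (Fin.castLE (by omega : n + d ≤ 4 * N))
                (Fin.castLE (by omega : d ≤ 4 * N))) ≤ ε := by
  -- scalars
  have hsum : (0:ℝ) < α + lam := by linarith
  have hne : (α + lam : ℝ) ≠ 0 := ne_of_gt hsum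
  set s : ℝ := Real.sqrt (α / (α + lam)) with hs_def
  set t : ℝ := Real.sqrt (lam / (α + lam)) with ht_def
  have hs2 : s * s = α / (α + lam) := Real.mul_self_sqrt (by positivity)
  have ht2 : t * t = lam / (α + lam) := Real.mul_self_sqrt (by positivity)
  have hst : s * s + t * t = 1 := by rw [hs2, ht2]; field_simp
  have hsc1 : ((α:ℂ) + (lam:ℂ)) * ((s:ℂ) * (s:ℂ)) = (α:ℂ) := by
    have h1 : ((s:ℂ) * (s:ℂ)) = ((s*s : ℝ) : ℂ) := by push_cast; ring
    rw [h1, hs2]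
    rw [show ((α:ℂ) + (lam:ℂ)) = ((α + lam : ℝ) : ℂ) by push_cast; ring]
    rw [← Complex.ofReal_mul]
    congr 1
    field_simp
  have hsc2 : ((α:ℂ) + (lam:ℂ)) * ((t:ℂ) * (t:ℂ)) = (lam:ℂ) := by
    have h1 : ((t:ℂ) * (t:ℂ)) = ((t*t : ℝ) : ℂ) := by push_cast; ring
    rw [h1, ht2]
    rw [show ((α:ℂ) + (lam:ℂ)) = ((α + lam : ℝ) : ℂ) by push_cast; ring]
    rw [← Complex.ofReal_mul]
    congr 1
    field_simp
  -- the row permutation τ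
  obtain ⟨τ, hτ⟩ : ∃ τ : Fin (2*N) ≃ Fin (2*N), ∀ i : Fin (2*N),
      (τ i : ℕ) = if (i:ℕ) < n then (i:ℕ) else if (i:ℕ) < n+d then (i:ℕ) - n + N
        else if (i:ℕ) < N+d then (i:ℕ) - d else (i:ℕ) := by
    refine ⟨⟨fun i => ⟨if (i:ℕ) < n then (i:ℕ) else if (i:ℕ) < n+d then (i:ℕ) - n + N
          else if (i:ℕ) < N+d then (i:ℕ) - d else (i:ℕ), by have := i.isLt; split_ifs <;> omega⟩,
      fun j => ⟨if (j:ℕ) < n then (j:ℕ) else if (j:ℕ) < N then (j:ℕ) + d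
          else if (j:ℕ) < N+d then (j:ℕ) - N + n else (j:ℕ), by have := j.isLt; split_ifs <;> omega⟩,
      fun i => ?_, fun j => ?_⟩, fun i => rfl⟩
    · apply Fin.ext; have := i.isLt; simp only; split_ifs <;> omega
    · apply Fin.ext; have := j.isLt; simp only; split_ifs <;> omega
  -- the cyclic shift σ
  obtain ⟨σ, hσ⟩ : ∃ σ : Fin (2*N) ≃ Fin (2*N), ∀ i : Fin (2*N),
      (σ i : ℕ) = if (i:ℕ) < n then (i:ℕ) + (2*N - n) else (i:ℕ) - n := by
    refine ⟨⟨fun i => ⟨if (i:ℕ) < n then (i:ℕ) + (2*N - n) else (i:ℕ) - n,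
        by have := i.isLt; split_ifs <;> omega⟩,
      fun j => ⟨if (j:ℕ) < 2*N - n then (j:ℕ) + n else (j:ℕ) - (2*N - n),
        by have := j.isLt; split_ifs <;> omega⟩,
      fun i => ?_, fun j => ?_⟩, fun i => rfl⟩
    · apply Fin.ext; have := i.isLt; simp only; split_ifs <;> omega
    · apply Fin.ext; have := j.isLt; simp only; split_ifs <;> omega
  -- the reindexing equivalences
  have hNN : N + N = 2*N := by omega
  have h44 : 2*N + 2*N = 4*N := by omega
  set eN : Fin N ⊕ Fin N ≃ Fin (2*N) := finSumFinEquiv.trans (finCongr hNN) with heN_def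
  set e4 : Fin (2*N) ⊕ Fin (2*N) ≃ Fin (4*N) := finSumFinEquiv.trans (finCongr h44) with he4_def
  have heNl : ∀ (x : Fin (2*N)) (h : (x:ℕ) < N), eN.symm x = Sum.inl ⟨(x:ℕ), h⟩ := by
    intro x h
    rw [Equiv.symm_apply_eq]
    apply Fin.ext
    simp [heN_def]
  have heNr : ∀ (x : Fin (2*N)) (h : N ≤ (x:ℕ)), eN.symm x = Sum.inr ⟨(x:ℕ) - N, by omega⟩ := by
    intro x h
    rw [Equiv.symm_apply_eq]
    apply Fin.ext
    have := x.isLt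
    simp [heN_def]
    omega
  have he4l : ∀ (x : Fin (4*N)) (h : (x:ℕ) < 2*N), e4.symm x = Sum.inl ⟨(x:ℕ), h⟩ := by
    intro x h
    rw [Equiv.symm_apply_eq]
    apply Fin.ext
    simp [he4_def]
  -- the matrices
  have h1U : (1 : Matrix (Fin N) (Fin N) ℂ) ∈ Matrix.unitaryGroup (Fin N) ℂ := by
    rw [Matrix.mem_unitaryGroup_iff]; simp
  set D0 : Matrix (Fin (2*N)) (Fin (2*N)) ℂ :=
    (Matrix.fromBlocks U 0 0 (1 : Matrix (Fin N) (Fin N) ℂ)).submatrix eN.symm eN.symm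
    with hD0_def
  have hD0 : D0 ∈ Matrix.unitaryGroup (Fin (2*N)) ℂ :=
    submatrix_mem_unitaryGroup eN.symm eN.symm _ (fromBlocks_diag_unitary U 1 hU h1U)
  set Ut : Matrix (Fin (2*N)) (Fin (2*N)) ℂ := D0.submatrix τ (Equiv.refl _) with hUt_def
  have hUt : Ut ∈ Matrix.unitaryGroup (Fin (2*N)) ℂ :=
    submatrix_mem_unitaryGroup τ (Equiv.refl _) _ hD0
  set P : Matrix (Fin (2*N)) (Fin (2*N)) ℂ :=
    (1 : Matrix (Fin (2*N)) (Fin (2*N)) ℂ).submatrix σ (Equiv.refl _) with hP_def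
  have h12N : (1 : Matrix (Fin (2*N)) (Fin (2*N)) ℂ) ∈ Matrix.unitaryGroup (Fin (2*N)) ℂ := by
    rw [Matrix.mem_unitaryGroup_iff]; simp
  have hP : P ∈ Matrix.unitaryGroup (Fin (2*N)) ℂ :=
    submatrix_mem_unitaryGroup σ (Equiv.refl _) _ h12N
  set Q : Matrix (Fin (2*N) ⊕ Fin (2*N)) (Fin (2*N) ⊕ Fin (2*N)) ℂ :=
    Matrix.fromBlocks ((s:ℂ) • 1) (-((t:ℂ) • 1)) ((t:ℂ) • 1) ((s:ℂ) • 1) with hQ_def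
  have hQ : Q ∈ Matrix.unitaryGroup (Fin (2*N) ⊕ Fin (2*N)) ℂ := rot_unitary s t hst
  set W2 : Matrix (Fin (2*N) ⊕ Fin (2*N)) (Fin (2*N) ⊕ Fin (2*N)) ℂ :=
    star Q * Matrix.fromBlocks Ut 0 0 P * Q with hW2_def
  have hW2 : W2 ∈ Matrix.unitaryGroup (Fin (2*N) ⊕ Fin (2*N)) ℂ :=
    mul_mem (mul_mem (Unitary.star_mem hQ) (fromBlocks_diag_unitary Ut P hUt hP)) hQ
  refine ⟨W2.submatrix e4.symm e4.symm,
    submatrix_mem_unitaryGroup e4.symm e4.symm _ hW2, ?_⟩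
  -- corner entries
  have hcorner : ∀ (i : Fin (n+d)) (j : Fin d),
      (W2.submatrix e4.symm e4.symm).submatrix
        (Fin.castLE (by omega : n + d ≤ 4 * N)) (Fin.castLE (by omega : d ≤ 4 * N)) i j
      = ((s:ℂ) * s) * Ut ⟨(i:ℕ), by omega⟩ ⟨(j:ℕ), by omega⟩
        + ((t:ℂ) * t) * P ⟨(i:ℕ), by omega⟩ ⟨(j:ℕ), by omega⟩ := by
    intro i j
    rw [Matrix.submatrix_apply, Matrix.submatrix_apply]
    rw [he4l _ (by simp [Fin.castLE]; omega), he4l _ (by simp [Fin.castLE]; omega)]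
    rw [hW2_def, hQ_def]
    exact block00_entry s t Ut P _ _
  -- entry values of Ut and P in the corner
  have hUt_top : ∀ (i : Fin (n+d)) (j : Fin d) (hi : (i:ℕ) < n),
      Ut ⟨(i:ℕ), by omega⟩ ⟨(j:ℕ), by omega⟩
        = U ⟨(i:ℕ), by omega⟩ ⟨(j:ℕ), by omega⟩ := by
    intro i j hi
    rw [hUt_def, Matrix.submatrix_apply, hD0_def, Matrix.submatrix_apply]
    have hv : (τ ⟨(i:ℕ), by omega⟩ : ℕ) = (i:ℕ) := by rw [hτ]; simp [hi]
    have h1 : eN.symm (τ ⟨(i:ℕ), by omega⟩) = Sum.inl ⟨(i:ℕ), by omega⟩ := by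
      rw [heNl _ (show ((τ ⟨(i:ℕ), by omega⟩ : Fin (2*N)) : ℕ) < N by rw [hv]; omega)]
      exact congrArg Sum.inl (Fin.ext hv)
    have h2 : eN.symm ((Equiv.refl (Fin (2*N))) ⟨(j:ℕ), by omega⟩) = Sum.inl ⟨(j:ℕ), by omega⟩ :=
      heNl _ (by simp; omega)
    rw [h1, h2, Matrix.fromBlocks_apply₁₁]
  have hUt_bot : ∀ (i : Fin (n+d)) (j : Fin d) (hi : ¬ (i:ℕ) < n),
      Ut ⟨(i:ℕ), by omega⟩ ⟨(j:ℕ), by omega⟩ = 0 := by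
    intro i j hi
    rw [hUt_def, Matrix.submatrix_apply, hD0_def, Matrix.submatrix_apply]
    have hid : (i:ℕ) < n + d := i.isLt
    have hv : (τ ⟨(i:ℕ), by omega⟩ : ℕ) = (i:ℕ) - n + N := by
      rw [hτ]; simp only []; rw [if_neg hi, if_pos (by omega)]
    have h1 : eN.symm (τ ⟨(i:ℕ), by omega⟩) = Sum.inr ⟨(i:ℕ) - n, by omega⟩ := by
      rw [heNr _ (show N ≤ ((τ ⟨(i:ℕ), by omega⟩ : Fin (2*N)) : ℕ) by rw [hv]; omega)]
      exact congrArg Sum.inr (Fin.ext (by simp [hv]))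
    have h2 : eN.symm ((Equiv.refl (Fin (2*N))) ⟨(j:ℕ), by omega⟩) = Sum.inl ⟨(j:ℕ), by omega⟩ :=
      heNl _ (by simp; omega)
    rw [h1, h2, Matrix.fromBlocks_apply₂₁]
    rfl
  have hP_top : ∀ (i : Fin (n+d)) (j : Fin d) (hi : (i:ℕ) < n),
      P ⟨(i:ℕ), by omega⟩ ⟨(j:ℕ), by omega⟩ = 0 := by
    intro i j hi
    rw [hP_def, Matrix.submatrix_apply]
    apply Matrix.one_apply_ne
    intro hcon
    have := congrArg Fin.val hcon
    rw [hσ] at this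
    simp only [if_pos hi] at this
    simp at this
    omega
  have hP_bot : ∀ (i : Fin (n+d)) (j : Fin d) (hi : ¬ (i:ℕ) < n),
      P ⟨(i:ℕ), by omega⟩ ⟨(j:ℕ), by omega⟩
        = if (i:ℕ) = n + (j:ℕ) then 1 else 0 := by
    intro i j hi
    rw [hP_def, Matrix.submatrix_apply]
    have hv : (σ ⟨(i:ℕ), by omega⟩ : ℕ) = (i:ℕ) - n := by rw [hσ]; simp [hi]
    by_cases hij : (i:ℕ) = n + (j:ℕ)
    · rw [if_pos hij]
      rw [show σ ⟨(i:ℕ), by omega⟩ = ((Equiv.refl (Fin (2*N))) ⟨(j:ℕ), by omega⟩) from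
        Fin.ext (by simp [hv]; omega)]
      exact Matrix.one_apply_eq _
    · rw [if_neg hij]
      apply Matrix.one_apply_ne
      intro hcon
      have := congrArg Fin.val hcon
      rw [hv] at this
      simp at this
      omega
  have key : ((Matrix.of fun (i : Fin (n + d)) (j : Fin d) =>
          if h : (i : ℕ) < n then A ⟨i, h⟩ j
          else if (i : ℕ) = n + (j : ℕ) then (lam : ℂ) else 0)
        - ((α : ℂ) + (lam : ℂ)) •
            (W2.submatrix e4.symm e4.symm).submatrix
              (Fin.castLE (by omega : n + d ≤ 4 * N)) (Fin.castLE (by omega : d ≤ 4 * N)))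
      = Matrix.of fun (i : Fin (n + d)) (j : Fin d) =>
          if h : (i : ℕ) < n then
            (A - (α : ℂ) • U.submatrix (Fin.castLE hnN) (Fin.castLE hdN)) ⟨i, h⟩ j
          else 0 := by
    ext i j
    rw [Matrix.sub_apply, Matrix.smul_apply, hcorner i j, smul_eq_mul]
    by_cases hi : (i:ℕ) < n
    · rw [Matrix.of_apply, Matrix.of_apply, dif_pos hi, dif_pos hi,
        hUt_top i j hi, hP_top i j hi]
      rw [Matrix.sub_apply, Matrix.smul_apply, Matrix.submatrix_apply, smul_eq_mul]
      have hcast : U (⟨(i:ℕ), by omega⟩ : Fin N) (⟨(j:ℕ), by omega⟩ : Fin N)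
          = U (Fin.castLE hnN ⟨(i:ℕ), hi⟩) (Fin.castLE hdN j) := by
        congr 1
      rw [hcast, mul_zero, add_zero, ← mul_assoc, hsc1]
    · rw [Matrix.of_apply, Matrix.of_apply, dif_neg hi, dif_neg hi,
        hUt_bot i j hi, hP_bot i j hi]
      by_cases hij : (i:ℕ) = n + (j:ℕ)
      · rw [if_pos hij, if_pos hij, mul_zero, zero_add, mul_one, hsc2, sub_self]
      · rw [if_neg hij, if_neg hij, mul_zero, zero_add, mul_zero, mul_zero, sub_zero]
  rw [key]
  exact le_trans (l2OpNorm_stack _) hBE
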